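/- Define τ(R) = (1/α) R log(R+1) for a fixed α > 0, a strictly increasing bijection of ℝ_{≥0}. Then lim_{r→∞} [r² τ⁻¹(r²) log r] / r⁴ = α/2. -/

import Mathlib

open Filter

/-- Proposition 6.2 (abstract form): for `τ(R) = (1/α) R log(R+1)` with inverse `σ` on `[0,∞)`,
`r² σ(r²) log r / r⁴ → α/2` as `r → ∞`. -/
theorem stmt_17 (α : ℝ) (hα : 0 < α) (σ : ℝ → ℝ)
    (hσ : ∀ r : ℝ, 0 ≤ r → 0 ≤ σ r ∧ (1 / α) * σ r * Real.log (σ r + 1) = r) :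
    Tendsto (fun r : ℝ => r ^ 2 * σ (r ^ 2) * Real.log r / r ^ 4) atTop
      (nhds (α / 2)) := by
  have hα' : α ≠ 0 := hα.ne'
  -- σ → ∞
  have hσtop : Tendsto σ atTop atTop := by
    rw [tendsto_atTop_atTop]
    intro M
    refine ⟨max 0 (M * Real.log (M + 1) / α) + 1, fun r hr => ?_⟩
    have hr0 : 0 ≤ r := le_trans (by positivity) hr
    obtain ⟨hσ0, hσeq⟩ := hσ r hr0
    by_contra h
    push_neg at h
    have hM0 : 0 ≤ M := le_of_lt (lt_of_le_of_lt hσ0 h)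
    have hlog : σ r * Real.log (σ r + 1) ≤ M * Real.log (M + 1) := by
      have h1 : (0:ℝ) ≤ Real.log (σ r + 1) := Real.log_nonneg (by linarith)
      have h2 : Real.log (σ r + 1) ≤ Real.log (M + 1) :=
        Real.log_le_log (by linarith) (by linarith)
      exact mul_le_mul h.le h2 h1 hM0
    have heq : σ r * Real.log (σ r + 1) = α * r := by
      field_simp at hσeq; linarith
    have : r ≤ M * Real.log (M + 1) / α := by
      rw [le_div_iff₀ hα]; nlinarith
    have := le_max_right 0 (M * Real.log (M + 1) / α)
    linarith
  have hsq : Tendsto (fun r : ℝ => r ^ 2) atTop atTop := tendsto_pow_atTop two_ne_zero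
  have hRtop : Tendsto (fun r : ℝ => σ (r ^ 2)) atTop atTop := hσtop.comp hsq
  -- log (R+1) → ∞
  have hlog1 : Tendsto (fun R : ℝ => Real.log (R + 1)) atTop atTop :=
    Real.tendsto_log_atTop.comp (tendsto_atTop_add_const_right _ 1 tendsto_id)
  have hinv : Tendsto (fun R : ℝ => (Real.log (R + 1))⁻¹) atTop (nhds 0) :=
    hlog1.inv_tendsto_atTop
  -- log R / log (R+1) → 1
  have h1 : Tendsto (fun R : ℝ => Real.log R / Real.log (R + 1)) atTop (nhds 1) := by
    have hquot : Tendsto (fun R : ℝ => Real.log ((R + 1) / R)) atTop (nhds 0) := by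
      have hfrac : Tendsto (fun R : ℝ => (R + 1) / R) atTop (nhds 1) := by
        have h := (tendsto_const_nhds (x := (1:ℝ)) (f := atTop (α := ℝ))).add
          (tendsto_inv_atTop_zero : Tendsto (fun x : ℝ => x⁻¹) atTop (nhds 0))
        simp only [add_zero] at h
        apply h.congr'
        filter_upwards [eventually_ge_atTop (1:ℝ)] with R hR
        field_simp
      have := (Real.continuousAt_log one_ne_zero).tendsto.comp hfrac
      simpa [Function.comp_def] using this
    have hmul : Tendsto (fun R : ℝ => Real.log ((R + 1) / R) * (Real.log (R + 1))⁻¹)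
        atTop (nhds 0) := by simpa using hquot.mul hinv
    have := (tendsto_const_nhds (x := (1:ℝ)) (f := atTop (α := ℝ))).sub hmul
    simp only [sub_zero] at this
    apply this.congr'
    filter_upwards [eventually_ge_atTop (2:ℝ)] with R hR
    have hR0 : (0:ℝ) < R := by linarith
    have hl : Real.log ((R + 1) / R) = Real.log (R + 1) - Real.log R :=
      Real.log_div (by linarith) hR0.ne'
    have hlog0 : Real.log (R + 1) ≠ 0 := by
      have : (1:ℝ) < R + 1 := by linarith
      exact (Real.log_pos this).ne'
    field_simp [hl]
    rw [hl]; ring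
  -- log log (R+1) / log(R+1) → 0
  have h2 : Tendsto (fun R : ℝ => Real.log (Real.log (R + 1)) / Real.log (R + 1))
      atTop (nhds 0) := Real.isLittleO_log_id_atTop.tendsto_div_nhds_zero.comp hlog1
  -- log α / log(R+1) → 0
  have h3 : Tendsto (fun R : ℝ => Real.log α / Real.log (R + 1)) atTop (nhds 0) := by
    have := tendsto_const_nhds (x := Real.log α) (f := atTop (α := ℝ)) |>.mul hinv
    simpa [div_eq_mul_inv] using this
  have hmain : Tendsto (fun R : ℝ =>
      α / 2 * ((Real.log R + Real.log (Real.log (R + 1)) - Real.log α) / Real.log (R + 1)))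
      atTop (nhds (α / 2)) := by
    have h := ((h1.add h2).sub h3)
    have h' : Tendsto (fun R : ℝ =>
        (Real.log R + Real.log (Real.log (R + 1)) - Real.log α) / Real.log (R + 1))
        atTop (nhds 1) := by
      simp only [add_sub_cancel_right] at h
      convert h using 2 with R
      rw [sub_div, add_div]
    have := tendsto_const_nhds (x := α / 2) (f := atTop (α := ℝ)) |>.mul h'
    simpa using this
  -- compose with σ (r^2)
  have hcomp : Tendsto (fun r : ℝ =>
      α / 2 * ((Real.log (σ (r ^ 2)) + Real.log (Real.log (σ (r ^ 2) + 1)) - Real.log α)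
        / Real.log (σ (r ^ 2) + 1))) atTop (nhds (α / 2)) := hmain.comp hRtop
  apply hcomp.congr'
  filter_upwards [eventually_ge_atTop (1:ℝ), hRtop.eventually_ge_atTop 3] with r hr hR
  have hr0 : (0:ℝ) < r := by linarith
  have hr2 : (0:ℝ) ≤ r ^ 2 := by positivity
  obtain ⟨hσ0, hσeq⟩ := hσ (r ^ 2) hr2
  set R := σ (r ^ 2) with hRdef
  have hR0 : (0:ℝ) < R := by linarith
  have hlogR1 : (0:ℝ) < Real.log (R + 1) := Real.log_pos (by linarith)
  -- r^2 = (1/α) R log(R+1)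
  have hlogr2 : Real.log (r ^ 2) = 2 * Real.log r := by
    rw [Real.log_pow]; norm_num
  have hlogval : Real.log (r ^ 2)
      = Real.log R + Real.log (Real.log (R + 1)) - Real.log α := by
    rw [← hσeq]
    rw [Real.log_mul (by positivity) hlogR1.ne', Real.log_mul (by positivity) hR0.ne',
      one_div, Real.log_inv]
    ring
  have hlogr : Real.log r
      = (Real.log R + Real.log (Real.log (R + 1)) - Real.log α) / 2 := by
    rw [← hlogval, hlogr2]; ring
  rw [hlogr]
  have h4 : r ^ 4 = (1 / α * R * Real.log (R + 1)) * r ^ 2 := by rw [hσeq]; ring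
  rw [h4]
  have hrne : r ≠ 0 := hr0.ne'
  field_simp
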